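/- The Dirichlet domain of the fundamental lattice Γ₀ is the open alcove at the origin: {H ∈ E : ‖H‖ < ‖H + γ‖ for every nonzero γ ∈ Γ₀} = {H ∈ E : ⟨α, H⟩ < π for every α ∈ Φ}. -/

import Mathlib

open scoped RealInnerProductSpace

section Aux

variable {E : Type*} [NormedAddCommGroup E] [InnerProductSpace ℝ E] [DecidableEq E]

/-- `π α^∨`, the generator map. -/
private noncomputable def rtv (α : E) : E := (2 * Real.pi / ⟪α, α⟫) • α

private lemma inner_self_pos' {x : E} (hx : x ≠ 0) : 0 < ⟪x, x⟫ :=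
  lt_of_le_of_ne real_inner_self_nonneg (Ne.symm (inner_self_ne_zero.2 hx))

private lemma rtv_neg (α : E) : rtv (-α) = - rtv α := by
  simp [rtv, inner_neg_neg, smul_neg]

private lemma inner_rtv_self {α : E} (hα : α ≠ 0) :
    ⟪rtv α, rtv α⟫ = 4 * Real.pi ^ 2 / ⟪α, α⟫ := by
  have hA : ⟪α, α⟫ ≠ 0 := inner_self_ne_zero.2 hα
  rw [rtv, real_inner_smul_left, real_inner_smul_right]
  field_simp
  ring

private lemma rtv_ne_zero {α : E} (hα : α ≠ 0) : rtv α ≠ 0 := by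
  have hA : 0 < ⟪α, α⟫ := inner_self_pos' hα
  have : 2 * Real.pi / ⟪α, α⟫ ≠ 0 := by
    have := Real.pi_pos; positivity
  exact smul_ne_zero this hα

private lemma inner_sum_multiset (x : E) (g : E → E) (s : Multiset E) :
    ⟪(s.map g).sum, x⟫ = (s.map fun a => ⟪g a, x⟫).sum := by
  induction s using Multiset.induction_on with
  | empty => simp
  | cons a t ih => simp [inner_add_left, ih]

private lemma sum_map_div_two (s : Multiset E) (u : E → ℝ) :
    (s.map fun a => u a / 2).sum = (s.map u).sum / 2 := by
  induction s using Multiset.induction_on with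
  | empty => simp
  | cons a t ih => simp [ih]; ring

/-- strict sum inequality on a nonempty multiset -/
private lemma sum_map_lt_sum_map (s : Multiset E) (hs : s ≠ 0) (u v : E → ℝ)
    (h : ∀ a ∈ s, u a < v a) : (s.map u).sum < (s.map v).sum := by
  obtain ⟨a, ha⟩ := Multiset.exists_mem_of_ne_zero hs
  obtain ⟨t, rfl⟩ := Multiset.exists_cons_of_mem ha
  simp only [Multiset.map_cons, Multiset.sum_cons]
  have h1 : u a < v a := h a (Multiset.mem_cons_self a t)
  have h2 : (t.map u).sum ≤ (t.map v).sum :=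
    Multiset.sum_map_le_sum_map u v fun b hb => le_of_lt (h b (Multiset.mem_cons_of_mem hb))
  linarith

/-- lower bound on the norm of a sum with pairwise nonneg inner products -/
private lemma sum_sq_lower (g : E → E) :
    ∀ s : Multiset E, (∀ a ∈ s, ∀ b ∈ s.erase a, 0 ≤ ⟪g a, g b⟫) →
      (s.map fun a => ⟪g a, g a⟫).sum ≤ ⟪(s.map g).sum, (s.map g).sum⟫ := by
  intro s
  induction s using Multiset.induction_on with
  | empty => simp
  | cons a t ih =>
    intro h
    have ht : ∀ a' ∈ t, ∀ b ∈ t.erase a', 0 ≤ ⟪g a', g b⟫ := by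
      intro a' ha' b hb
      refine h a' (Multiset.mem_cons_of_mem ha') b ?_
      exact Multiset.mem_of_le (Multiset.erase_le_erase a' (Multiset.le_cons_self t a)) hb
    have hcross : 0 ≤ ⟪g a, (t.map g).sum⟫ := by
      rw [real_inner_comm, inner_sum_multiset]
      refine Multiset.sum_nonneg ?_
      intro x hx
      obtain ⟨b, hb, rfl⟩ := Multiset.mem_map.1 hx
      have hb' : b ∈ (a ::ₘ t).erase a := by
        rw [Multiset.erase_cons_head]; exact hb
      have := h a (Multiset.mem_cons_self a t) b hb'
      rwa [real_inner_comm] at this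
    have := ih ht
    simp only [Multiset.map_cons, Multiset.sum_cons]
    rw [inner_add_add_self]
    rw [real_inner_comm ((t.map g).sum) (g a)] at *
    nlinarith [this, hcross]

end Aux

section Main

variable {E : Type*} [NormedAddCommGroup E] [InnerProductSpace ℝ E] [DecidableEq E]

/-- if two roots have negative inner product and don't cancel, the sum of their
scaled coroots is again a scaled coroot. -/
private lemma rootsum (Φ : Finset E)
    (hne : ∀ α ∈ Φ, α ≠ 0)
    (hrefl : ∀ α ∈ Φ, ∀ β ∈ Φ, β - (2 * ⟪β, α⟫ / ⟪α, α⟫) • α ∈ Φ)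
    (hint : ∀ α ∈ Φ, ∀ β ∈ Φ, ∃ n : ℤ, 2 * ⟪β, α⟫ / ⟪α, α⟫ = (n : ℝ))
    {α β : E} (hα : α ∈ Φ) (hβ : β ∈ Φ) (hip : ⟪α, β⟫ < 0) (hs : α + β ≠ 0) :
    ∃ δ ∈ Φ, rtv δ = rtv α + rtv β := by
  set A := ⟪α, α⟫ with hAdef
  set B := ⟪β, β⟫ with hBdef
  have hA : 0 < A := inner_self_pos' (hne α hα)
  have hB : 0 < B := inner_self_pos' (hne β hβ)
  have hsym : ⟪β, α⟫ = ⟪α, β⟫ := real_inner_comm α β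
  obtain ⟨m, hm⟩ := hint α hα β hβ   -- 2⟪β,α⟫/A = m
  obtain ⟨n, hn⟩ := hint β hβ α hα   -- 2⟪α,β⟫/B = n
  have hmneg : (m : ℝ) < 0 := by
    rw [← hm]; exact div_neg_of_neg_of_pos (by rw [hsym]; linarith) hA
  have hnneg : (n : ℝ) < 0 := by
    rw [← hn]; exact div_neg_of_neg_of_pos (by linarith) hB
  by_cases hm1 : (m : ℝ) = -1
  · -- δ = r_β(α) = α - (2⟪α,β⟫/B) β
    refine ⟨α - (2 * ⟪α, β⟫ / B) • β, hrefl β hβ α hα, ?_⟩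
    have h2p : 2 * ⟪α, β⟫ = -A := by
      have := hm; rw [hm1] at this
      rw [div_eq_iff (ne_of_gt hA : ⟪α, α⟫ ≠ 0)] at this
      rw [hsym] at this; linarith
    set c : ℝ := 2 * ⟪α, β⟫ / B with hc
    have hδδ : ⟪α - c • β, α - c • β⟫ = A := by
      rw [inner_sub_sub_self]
      rw [real_inner_smul_right, real_inner_smul_left, real_inner_smul_left,
        real_inner_smul_right]
      rw [hsym, hc]
      field_simp
      ring
    rw [rtv, rtv, rtv, hδδ, smul_sub, smul_smul]
    have hscal : 2 * Real.pi / A * c = -(2 * Real.pi / B) := by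
      rw [hc]
      rw [div_mul_div_comm]
      rw [show 2 * Real.pi * (2 * ⟪α, β⟫) = 2 * Real.pi * (2 * ⟪α, β⟫) from rfl]
      have : 2 * Real.pi * (2 * ⟪α, β⟫) = 2 * Real.pi * (-A) := by rw [h2p]
      rw [this]
      field_simp
    rw [hscal, neg_smul, sub_neg_eq_add]
  · by_cases hn1 : (n : ℝ) = -1
    · -- δ = r_α(β) = β - (2⟪β,α⟫/A) α
      refine ⟨β - (2 * ⟪β, α⟫ / A) • α, hrefl α hα β hβ, ?_⟩
      have h2p : 2 * ⟪α, β⟫ = -B := by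
        have := hn; rw [hn1] at this
        rw [div_eq_iff (ne_of_gt hB : ⟪β, β⟫ ≠ 0)] at this; linarith
      set c : ℝ := 2 * ⟪β, α⟫ / A with hc
      have hδδ : ⟪β - c • α, β - c • α⟫ = B := by
        rw [inner_sub_sub_self]
        rw [real_inner_smul_right, real_inner_smul_left, real_inner_smul_left,
          real_inner_smul_right]
        rw [hsym, hc, hsym]
        field_simp
        ring
      rw [rtv, rtv, rtv, hδδ, smul_sub, smul_smul]
      have hscal : 2 * Real.pi / B * c = -(2 * Real.pi / A) := by
        rw [hc, hsym, div_mul_div_comm]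
        have : 2 * Real.pi * (2 * ⟪α, β⟫) = 2 * Real.pi * (-B) := by rw [h2p]
        rw [this]
        field_simp
      rw [hscal, neg_smul, sub_neg_eq_add]
      rw [add_comm]
    · -- both ≤ -2 : contradiction
      exfalso
      have hm2 : (m : ℝ) ≤ -2 := by
        have : m ≤ -2 := by
          have h1 : m < 0 := by exact_mod_cast hmneg
          have h2 : m ≠ -1 := by intro h; apply hm1; rw [h]; norm_num
          omega
        exact_mod_cast this
      have hn2 : (n : ℝ) ≤ -2 := by
        have : n ≤ -2 := by
          have h1 : n < 0 := by exact_mod_cast hnneg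
          have h2 : n ≠ -1 := by intro h; apply hn1; rw [h]; norm_num
          omega
        exact_mod_cast this
      -- 2⟪β,α⟫ = m A ≤ -2A,  2⟪α,β⟫ = n B ≤ -2B
      have e1 : 2 * ⟪β, α⟫ = (m : ℝ) * A := by
        rw [div_eq_iff (ne_of_gt hA : ⟪α, α⟫ ≠ 0)] at hm; rw [hAdef]; exact hm
      have e2 : 2 * ⟪α, β⟫ = (n : ℝ) * B := by
        rw [div_eq_iff (ne_of_gt hB : ⟪β, β⟫ ≠ 0)] at hn; rw [hBdef]; exact hn
      have hp1 : 2 * ⟪α, β⟫ ≤ -2 * A := by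
        rw [← hsym, e1]; nlinarith
      have hp2 : 2 * ⟪α, β⟫ ≤ -2 * B := by
        rw [e2]; nlinarith
      have hpos : 0 < ⟪α + β, α + β⟫ := inner_self_pos' hs
      rw [inner_add_add_self] at hpos
      rw [hsym] at hpos
      linarith
end Main

section Rest
variable {E : Type*} [NormedAddCommGroup E] [InnerProductSpace ℝ E] [DecidableEq E]

/-- the key estimate: for any nonzero sum of generators, `⟪γ, H⟫ < ⟪γ, γ⟫/2`. -/
private lemma key_estimate (Φ : Finset E)
    (hne : ∀ α ∈ Φ, α ≠ 0)
    (hrefl : ∀ α ∈ Φ, ∀ β ∈ Φ, β - (2 * ⟪β, α⟫ / ⟪α, α⟫) • α ∈ Φ)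
    (hint : ∀ α ∈ Φ, ∀ β ∈ Φ, ∃ n : ℤ, 2 * ⟪β, α⟫ / ⟪α, α⟫ = (n : ℝ))
    (H : E) (hH : ∀ α ∈ Φ, ⟪α, H⟫ < Real.pi) :
    ∀ (n : ℕ) (s : Multiset E), s.card ≤ n → (∀ α ∈ s, α ∈ Φ) →
      (s.map rtv).sum ≠ 0 →
      ⟪(s.map rtv).sum, H⟫ < ⟪(s.map rtv).sum, (s.map rtv).sum⟫ / 2 := by
  intro n
  induction n with
  | zero =>
    intro s hcard _ hne0
    exfalso
    rw [Multiset.card_eq_zero.1 (Nat.le_zero.1 hcard)] at hne0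
    simp at hne0
  | succ n ih =>
    intro s hcard hmem hne0
    by_cases hpair : ∀ a ∈ s, ∀ b ∈ s.erase a, 0 ≤ ⟪a, b⟫
    · -- direct estimate
      have hsne : s ≠ 0 := by rintro rfl; simp at hne0
      have step1 : ⟪(s.map rtv).sum, H⟫ = (s.map fun a => ⟪rtv a, H⟫).sum :=
        inner_sum_multiset H rtv s
      have step2 : (s.map fun a => ⟪rtv a, H⟫).sum <
          (s.map fun a => ⟪rtv a, rtv a⟫ / 2).sum := by
        apply sum_map_lt_sum_map s hsne
        intro a ha
        have haΦ : a ∈ Φ := hmem a ha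
        have haA : 0 < ⟪a, a⟫ := inner_self_pos' (hne a haΦ)
        rw [inner_rtv_self (hne a haΦ), rtv, real_inner_smul_left]
        have hπ := Real.pi_pos
        have h1 : ⟪a, H⟫ < Real.pi := hH a haΦ
        have h2 : 0 < 2 * Real.pi / ⟪a, a⟫ := by positivity
        calc 2 * Real.pi / ⟪a, a⟫ * ⟪a, H⟫ < 2 * Real.pi / ⟪a, a⟫ * Real.pi :=
              (mul_lt_mul_iff_right₀ h2).2 h1
          _ = 4 * Real.pi ^ 2 / ⟪a, a⟫ / 2 := by field_simp; ring
      have step3 : (s.map fun a => ⟪rtv a, rtv a⟫ / 2).sum ≤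
          ⟪(s.map rtv).sum, (s.map rtv).sum⟫ / 2 := by
        rw [sum_map_div_two]
        have : (s.map fun a => ⟪rtv a, rtv a⟫).sum ≤
            ⟪(s.map rtv).sum, (s.map rtv).sum⟫ := by
          apply sum_sq_lower
          intro a ha b hb
          have haΦ : a ∈ Φ := hmem a ha
          have hbΦ : b ∈ Φ := hmem b (Multiset.mem_of_mem_erase hb)
          have hA : 0 < ⟪a, a⟫ := inner_self_pos' (hne a haΦ)
          have hB : 0 < ⟪b, b⟫ := inner_self_pos' (hne b hbΦ)
          have hab : 0 ≤ ⟪a, b⟫ := hpair a ha b hb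
          rw [rtv, rtv, real_inner_smul_left, real_inner_smul_right]
          have hπ := Real.pi_pos
          have c1 : 0 ≤ 2 * Real.pi / ⟪a, a⟫ := by positivity
          have c2 : 0 ≤ 2 * Real.pi / ⟪b, b⟫ := by positivity
          positivity
        linarith
      rw [step1]; linarith
    · -- reduction
      push_neg at hpair
      obtain ⟨a, ha, b, hb, hab⟩ := hpair
      have haΦ : a ∈ Φ := hmem a ha
      have hbΦ : b ∈ Φ := hmem b (Multiset.mem_of_mem_erase hb)
      set t : Multiset E := (s.erase a).erase b with ht
      have hdecomp : s = a ::ₘ b ::ₘ t := by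
        rw [ht, Multiset.cons_erase hb, Multiset.cons_erase ha]
      have htmem : ∀ x ∈ t, x ∈ Φ := by
        intro x hx
        exact hmem x (Multiset.mem_of_mem_erase (Multiset.mem_of_mem_erase hx))
      have hcardt : t.card + 2 = s.card := by
        rw [hdecomp]; simp
      have hsum : (s.map rtv).sum = rtv a + rtv b + (t.map rtv).sum := by
        rw [hdecomp]; simp [add_assoc]
      by_cases hcancel : a + b = 0
      · have hba : b = -a := by linear_combination (norm := abel) hcancel
        have hs' : (s.map rtv).sum = (t.map rtv).sum := by
          rw [hsum, hba, rtv_neg]; abel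
        rw [hs']
        apply ih t (by omega) htmem
        rw [← hs']; exact hne0
      · obtain ⟨δ, hδΦ, hδ⟩ := rootsum Φ hne hrefl hint haΦ hbΦ hab hcancel
        have hs' : (s.map rtv).sum = ((δ ::ₘ t).map rtv).sum := by
          rw [hsum, Multiset.map_cons, Multiset.sum_cons, hδ]
        rw [hs']
        apply ih (δ ::ₘ t) (by simp; omega)
        · intro x hx
          rcases Multiset.mem_cons.1 hx with h | h
          · rw [h]; exact hδΦ
          · exact htmem x h
        · rw [← hs']; exact hne0

end Rest

/-- Theorem 4.5(i) of [SS18] / Theorem `thm-steinberg`(i): the Dirichlet domain of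
the fundamental lattice `Γ₀` (generated by `π α^∨`, `α ∈ Φ`) of a crystallographic
root system `Φ` is the open alcove at the origin `{H : ⟨α, H⟩ < π for all α ∈ Φ}`. -/
theorem dirichlet_of_fundamental_lattice_eq_alcove {E : Type*}
    [NormedAddCommGroup E] [InnerProductSpace ℝ E] [FiniteDimensional ℝ E]
    (Φ : Finset E)
    (hne : ∀ α ∈ Φ, α ≠ 0)
    (hspan : Submodule.span ℝ (Φ : Set E) = ⊤)
    (hrefl : ∀ α ∈ Φ, ∀ β ∈ Φ, β - (2 * ⟪β, α⟫ / ⟪α, α⟫) • α ∈ Φ)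
    (hint : ∀ α ∈ Φ, ∀ β ∈ Φ, ∃ n : ℤ, 2 * ⟪β, α⟫ / ⟪α, α⟫ = (n : ℝ))
    (Γ₀ : AddSubgroup E)
    (hΓ₀ : Γ₀ = AddSubgroup.closure ((fun α : E => (2 * Real.pi / ⟪α, α⟫) • α) '' Φ)) :
    {H : E | ∀ γ ∈ Γ₀, γ ≠ 0 → ‖H‖ < ‖H + γ‖} =
      {H : E | ∀ α ∈ Φ, ⟪α, H⟫ < Real.pi} := by
  classical
  have hπ := Real.pi_pos
  -- Φ is symmetric
  have hneg : ∀ α ∈ Φ, -α ∈ Φ := by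
    intro α hα
    have h := hrefl α hα α hα
    have hA : ⟪α, α⟫ ≠ 0 := inner_self_ne_zero.2 (hne α hα)
    have h2 : 2 * ⟪α, α⟫ / ⟪α, α⟫ = (2:ℝ) := by field_simp
    rw [h2] at h
    have : α - (2:ℝ) • α = -α := by
      rw [two_smul]; abel
    rwa [this] at h
  -- representation of lattice elements
  have hrepr : ∀ γ ∈ Γ₀, ∃ s : Multiset E, (∀ α ∈ s, α ∈ Φ) ∧
      γ = (s.map rtv).sum := by
    intro γ hγ
    rw [hΓ₀] at hγ
    refine AddSubgroup.closure_induction ?_ ?_ ?_ ?_ hγ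
    · rintro x ⟨α, hα, rfl⟩
      exact ⟨{α}, by simpa using hα, by simp [rtv]⟩
    · exact ⟨0, by simp, by simp⟩
    · rintro x y _ _ ⟨s₁, hs₁, rfl⟩ ⟨s₂, hs₂, rfl⟩
      refine ⟨s₁ + s₂, ?_, by simp⟩
      intro α hα
      rcases Multiset.mem_add.1 hα with h | h
      · exact hs₁ α h
      · exact hs₂ α h
    · rintro x _ ⟨s, hs, rfl⟩
      refine ⟨s.map (fun a => -a), ?_, ?_⟩
      · intro α hα
        obtain ⟨b, hb, rfl⟩ := Multiset.mem_map.1 hα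
        exact hneg b (hs b hb)
      · have hmn : ∀ t : Multiset E,
            (Multiset.map rtv (Multiset.map (fun a : E => -a) t)).sum
              = -(Multiset.map rtv t).sum := by
          intro t
          induction t using Multiset.induction_on with
          | empty => simp
          | cons a u ihu => simp only [Multiset.map_cons, Multiset.sum_cons, rtv_neg, ihu]; abel
        rw [hmn s]
  ext H
  simp only [Set.mem_setOf_eq]
  constructor
  · -- Dirichlet ⊆ alcove
    intro hD α hα
    have hA : 0 < ⟪α, α⟫ := lt_of_le_of_ne real_inner_self_nonneg
      (Ne.symm (inner_self_ne_zero.2 (hne α hα)))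
    set γ : E := -((2 * Real.pi / ⟪α, α⟫) • α) with hγdef
    have hγmem : γ ∈ Γ₀ := by
      rw [hΓ₀]
      exact neg_mem (AddSubgroup.subset_closure ⟨α, hα, rfl⟩)
    have hγne : γ ≠ 0 := by
      simp only [hγdef, ne_eq, neg_eq_zero]
      have : 2 * Real.pi / ⟪α, α⟫ ≠ 0 := by positivity
      exact smul_ne_zero this (hne α hα)
    have hlt := hD γ hγmem hγne
    have hsq : ‖H‖ ^ 2 < ‖H + γ‖ ^ 2 := by
      have h1 : (0:ℝ) ≤ ‖H‖ := norm_nonneg _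
      nlinarith [hlt]
    rw [norm_add_sq_real] at hsq
    have hinn : 0 < 2 * ⟪H, γ⟫ + ‖γ‖ ^ 2 := by nlinarith
    have hγH : ⟪H, γ⟫ = -(2 * Real.pi / ⟪α, α⟫ * ⟪α, H⟫) := by
      rw [hγdef, inner_neg_right, real_inner_smul_right, real_inner_comm α H]
    have hγn : ‖γ‖ ^ 2 = 4 * Real.pi ^ 2 / ⟪α, α⟫ := by
      rw [hγdef, ← real_inner_self_eq_norm_sq, inner_neg_neg]
      exact inner_rtv_self (hne α hα)
    rw [hγH, hγn] at hinn
    have hc : 0 < 2 * Real.pi / ⟪α, α⟫ := by positivity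
    -- 0 < -2c⟪α,H⟫ + 2cπ  where c = 2π/A
    have : 4 * Real.pi ^ 2 / ⟪α, α⟫ = 2 * Real.pi / ⟪α, α⟫ * (2 * Real.pi) := by
      field_simp; ring
    rw [this] at hinn
    nlinarith
  · -- alcove ⊆ Dirichlet
    intro hH γ hγ hγne
    obtain ⟨s, hs, hγeq⟩ := hrepr (-γ) (neg_mem hγ)
    have hsne : ((s.map rtv).sum : E) ≠ 0 := by
      rw [← hγeq]; simpa using hγne
    have hkey := key_estimate Φ hne hrefl hint H hH s.card s le_rfl hs hsne
    rw [← hγeq] at hkey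
    -- ⟪-γ, H⟫ < ⟪-γ, -γ⟫ / 2
    rw [inner_neg_left, inner_neg_neg] at hkey
    have hpos : 0 < 2 * ⟪H, γ⟫ + ‖γ‖ ^ 2 := by
      rw [← real_inner_self_eq_norm_sq, ← real_inner_comm H γ]
      linarith
    have hsq : ‖H‖ ^ 2 < ‖H + γ‖ ^ 2 := by
      rw [norm_add_sq_real]; nlinarith
    have h1 : (0:ℝ) ≤ ‖H + γ‖ := norm_nonneg _
    nlinarith
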